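/- For each integer n ≥ 5, the group G of order 2^n presented by generators a, b, r, s and relations r^{2^{n-3}} = s^2 = (sr)^2 = a^2 = b^2 = 1, [s,b] = [r,b] = 1, ara = r^{-1}, asa = sr, aba = b r^{2^{n-4}} is a nilpotent group (a 2-group) of order 2^n, isomorphic to a semidirect product (C_2 × D_{2^{n-3}}) ⋊ C_2. -/

import Mathlib

open Multiplicative


/-- The relators of the group G of order 2^n from Theorem 2: generators a, b, r, s
(indices 0, 1, 2, 3) with relations r^{2^{n-3}} = s^2 = (sr)^2 = a^2 = b^2 = 1,
[s,b] = [r,b] = 1, ara = r⁻¹, asa = sr, aba = b r^{2^{n-4}}. -/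
def nilRels (n : ℕ) : Set (FreeGroup (Fin 4)) :=
  let a := FreeGroup.of (0 : Fin 4)
  let b := FreeGroup.of (1 : Fin 4)
  let r := FreeGroup.of (2 : Fin 4)
  let s := FreeGroup.of (3 : Fin 4)
  {r ^ 2 ^ (n - 3), s ^ 2, (s * r) ^ 2, a ^ 2, b ^ 2,
    s * b * s⁻¹ * b⁻¹, r * b * r⁻¹ * b⁻¹,
    a * r * a * r, a * s * a * (s * r)⁻¹, a * b * a * (b * r ^ 2 ^ (n - 4))⁻¹}

private lemma pow_mod_eq' {G : Type*} [Monoid G] {g : G} {m : ℕ} (hg : g ^ m = 1) (x : ℕ) :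
    g ^ (x % m) = g ^ x := by
  conv_rhs => rw [← Nat.div_add_mod x m]
  rw [pow_add, pow_mul, hg, one_pow, one_mul]

/-- Group hom from C2 determined by an element of order dividing 2. -/
def c2hom {G : Type*} [Monoid G] (g : G) (hg : g ^ 2 = 1) : Multiplicative (ZMod 2) →* G where
  toFun c := g ^ (Multiplicative.toAdd c).val
  map_one' := by simp
  map_mul' a b := by
    simp only [toAdd_mul]
    rw [ZMod.val_add, pow_mod_eq' hg, pow_add]

@[simp] lemma c2hom_apply {G : Type*} [Monoid G] (g : G) (hg : g ^ 2 = 1)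
    (c : Multiplicative (ZMod 2)) : c2hom g hg c = g ^ (Multiplicative.toAdd c).val := rfl

lemma c2hom_gen {G : Type*} [Monoid G] (g : G) (hg : g ^ 2 = 1) :
    c2hom g hg (ofAdd 1) = g := by
  simp [c2hom_apply, show ((1 : ZMod 2)).val = 1 from rfl]

private lemma conj_pow' {G : Type*} [Group G] {a g g' : G} (ha : a * a = 1)
    (h : a * g * a = g') (v : ℕ) : a * g ^ v * a = g' ^ v := by
  induction v with
  | zero => simpa using ha
  | succ v ih =>
    rw [pow_succ, pow_succ, ← ih, ← h]
    have h2 : (a * g ^ v * a) * (a * g * a) = a * g ^ v * (a * a) * g * a := by group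
    rw [h2, ha, mul_one]
    group

namespace NilAux

/-- The order-2 automorphism of the dihedral group sending r to r⁻¹ and s to s*r. -/
def psi (m : ℕ) : DihedralGroup m →* DihedralGroup m where
  toFun x := match x with
    | .r i => .r (-i)
    | .sr i => .sr (1 - i)
  map_one' := by
    show DihedralGroup.r (-0) = 1
    rw [neg_zero, DihedralGroup.one_def]
  map_mul' a b := by
    rcases a with i | i <;> rcases b with j | j <;>
      simp only [DihedralGroup.r_mul_r, DihedralGroup.r_mul_sr, DihedralGroup.sr_mul_r,
        DihedralGroup.sr_mul_sr, DihedralGroup.r.injEq, DihedralGroup.sr.injEq] <;>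
      ring_nf

@[simp] lemma psi_r (m : ℕ) (i : ZMod m) : psi m (.r i) = .r (-i) := rfl
@[simp] lemma psi_sr (m : ℕ) (i : ZMod m) : psi m (.sr i) = .sr (1 - i) := rfl

lemma psi_psi (m : ℕ) (x : DihedralGroup m) : psi m (psi m x) = x := by
  rcases x with i | i <;> simp

end NilAux
namespace NilAux

variable (n : ℕ)

/-- The central element r^(2^(n-4)) of DihedralGroup (2^(n-3)). -/
def zel : DihedralGroup (2 ^ (n - 3)) := .r ((2 ^ (n - 4) : ℕ) : ZMod (2 ^ (n - 3)))

variable {n}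

lemma hmk (hn : 5 ≤ n) : 2 ^ (n - 3) = 2 * 2 ^ (n - 4) := by
  rw [show n - 3 = (n - 4) + 1 by omega, pow_succ, mul_comm]

lemma kk_add_kk (hn : 5 ≤ n) :
    ((2 ^ (n - 4) : ℕ) : ZMod (2 ^ (n - 3))) + ((2 ^ (n - 4) : ℕ) : ZMod (2 ^ (n - 3))) = 0 := by
  rw [← Nat.cast_add, ← two_mul, ← hmk hn, ZMod.natCast_self]

lemma kk_eq_neg (hn : 5 ≤ n) :
    -((2 ^ (n - 4) : ℕ) : ZMod (2 ^ (n - 3))) = ((2 ^ (n - 4) : ℕ) : ZMod (2 ^ (n - 3))) :=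
  neg_eq_of_add_eq_zero_right (kk_add_kk hn)

lemma zel_sq (hn : 5 ≤ n) : zel n ^ 2 = 1 := by
  rw [zel, pow_two, DihedralGroup.r_mul_r, kk_add_kk hn, DihedralGroup.one_def]

lemma zel_comm (hn : 5 ≤ n) (d : DihedralGroup (2 ^ (n - 3))) : zel n * d = d * zel n := by
  rcases d with i | i
  · rw [zel, DihedralGroup.r_mul_r, DihedralGroup.r_mul_r, add_comm]
  · rw [zel, DihedralGroup.r_mul_sr, DihedralGroup.sr_mul_r, sub_eq_add_neg, kk_eq_neg hn]

lemma psi_zel (hn : 5 ≤ n) : psi (2 ^ (n - 3)) (zel n) = zel n := by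
  rw [zel, psi_r, kk_eq_neg hn]

/-- the underlying function of the order-2 automorphism of C2 × D. -/
def alphaFun (p : Multiplicative (ZMod 2) × DihedralGroup (2 ^ (n - 3))) :
    Multiplicative (ZMod 2) × DihedralGroup (2 ^ (n - 3)) :=
  (p.1, psi (2 ^ (n - 3)) p.2 * zel n ^ (Multiplicative.toAdd p.1).val)

lemma alphaFun_mul (hn : 5 ≤ n) (p q : Multiplicative (ZMod 2) × DihedralGroup (2 ^ (n - 3))) :
    alphaFun (p * q) = alphaFun p * alphaFun q := by
  obtain ⟨c1, d1⟩ := p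
  obtain ⟨c2, d2⟩ := q
  have hz : ∀ x : DihedralGroup (2 ^ (n - 3)), Commute (zel n) x := fun x => zel_comm hn x
  refine Prod.ext rfl ?_
  show psi _ (d1 * d2) * zel n ^ (Multiplicative.toAdd (c1 * c2)).val =
    (psi _ d1 * zel n ^ (Multiplicative.toAdd c1).val) *
      (psi _ d2 * zel n ^ (Multiplicative.toAdd c2).val)
  rw [toAdd_mul, ZMod.val_add, pow_mod_eq' (zel_sq hn), pow_add, map_mul]
  exact ((hz (psi _ d2)).pow_left _).symm.mul_mul_mul_comm _ _

lemma alphaFun_invol (hn : 5 ≤ n) (p : Multiplicative (ZMod 2) × DihedralGroup (2 ^ (n - 3))) :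
    alphaFun (alphaFun p) = p := by
  obtain ⟨c, d⟩ := p
  refine Prod.ext rfl ?_
  show psi _ (psi _ d * zel n ^ (Multiplicative.toAdd c).val) *
      zel n ^ (Multiplicative.toAdd c).val = d
  rw [map_mul, map_pow, psi_zel hn, psi_psi, mul_assoc, ← pow_add, ← two_mul, pow_mul,
    zel_sq hn, one_pow, mul_one]

variable (n) in
/-- The order-2 automorphism of C2 × D. -/
def alpha (hn : 5 ≤ n) : MulAut (Multiplicative (ZMod 2) × DihedralGroup (2 ^ (n - 3))) where
  toFun := alphaFun
  invFun := alphaFun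
  left_inv := alphaFun_invol hn
  right_inv := alphaFun_invol hn
  map_mul' := alphaFun_mul hn

@[simp] lemma alpha_apply (hn : 5 ≤ n) (p) :
    alpha n hn p = (p.1, psi (2 ^ (n - 3)) p.2 * zel n ^ (Multiplicative.toAdd p.1).val) := rfl

lemma alpha_sq (hn : 5 ≤ n) : alpha n hn ^ 2 = 1 := by
  rw [pow_two]
  exact MulEquiv.ext fun p => alphaFun_invol hn p

variable (n) in
/-- The action of C2 on C2 × D. -/
def phi (hn : 5 ≤ n) :
    Multiplicative (ZMod 2) →* MulAut (Multiplicative (ZMod 2) × DihedralGroup (2 ^ (n - 3))) :=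
  c2hom (alpha n hn) (alpha_sq hn)

end NilAux
namespace NilAux

open SemidirectProduct

variable (n : ℕ) (hn : 5 ≤ n)

/-- The concrete semidirect product (C2 × D) ⋊ C2. -/
abbrev K :=
  (Multiplicative (ZMod 2) × DihedralGroup (2 ^ (n - 3))) ⋊[phi n hn] Multiplicative (ZMod 2)

/-- generator of C2 -/
def xgen : Multiplicative (ZMod 2) := ofAdd 1

lemma xgen_mul : xgen * xgen = 1 := by decide
lemma xgen_inv : xgen⁻¹ = xgen := by decide
lemma toAdd_xgen_val : (Multiplicative.toAdd xgen).val = 1 := rfl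

def Agen : K n hn := inr xgen
def Bgen : K n hn := inl (xgen, 1)
def Rgen : K n hn := inl (1, .r 1)
def Sgen : K n hn := inl (1, .sr 0)

def fwdFun : Fin 4 → K n hn
  | 0 => Agen n hn
  | 1 => Bgen n hn
  | 2 => Rgen n hn
  | 3 => Sgen n hn

lemma phi_xgen : phi n hn xgen = alpha n hn := c2hom_gen _ _

lemma Rgen_pow (v : ℕ) : Rgen n hn ^ v = inl (1, .r (v : ZMod (2 ^ (n - 3)))) := by
  rw [Rgen, ← map_pow, Prod.pow_mk, one_pow, DihedralGroup.r_one_pow]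

lemma hrels : ∀ w ∈ nilRels n, FreeGroup.lift (fwdFun n hn) w = 1 := by
  have hA2 : Agen n hn * Agen n hn = 1 := by
    rw [Agen, ← map_mul, xgen_mul, map_one]
  have hAinv : (Agen n hn)⁻¹ = Agen n hn := by rw [Agen, ← map_inv, xgen_inv]
  have haut : ∀ p, Agen n hn * inl p * Agen n hn = inl (alpha n hn p) := by
    intro p
    conv_lhs => rw [Agen]
    rw [show (inr xgen : K n hn) * inl p * inr xgen
        = inr xgen * inl p * inr xgen⁻¹ by rw [xgen_inv], ← inl_aut, phi_xgen]
  intro w hw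
  simp only [nilRels, Set.mem_insert_iff, Set.mem_singleton_iff] at hw
  rcases hw with rfl | rfl | rfl | rfl | rfl | rfl | rfl | rfl | rfl | rfl <;>
    simp only [map_mul, map_pow, map_inv, FreeGroup.lift_apply_of]
  · -- r ^ 2^(n-3)
    show Rgen n hn ^ 2 ^ (n - 3) = 1
    rw [Rgen_pow, ZMod.natCast_self]
    rfl
  · -- s^2
    show Sgen n hn ^ 2 = 1
    rw [Sgen, ← map_pow, Prod.pow_mk, one_pow, pow_two, DihedralGroup.sr_mul_sr]
    norm_num
    rfl
  · -- (s*r)^2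
    show (Sgen n hn * Rgen n hn) ^ 2 = 1
    rw [Sgen, Rgen, ← map_mul, Prod.mk_mul_mk, one_mul, DihedralGroup.sr_mul_r, zero_add,
      ← map_pow, Prod.pow_mk, one_pow, pow_two, DihedralGroup.sr_mul_sr, sub_self]
    rfl
  · -- a^2
    show Agen n hn ^ 2 = 1
    rw [pow_two]; exact hA2
  · -- b^2
    show Bgen n hn ^ 2 = 1
    rw [Bgen, ← map_pow, Prod.pow_mk, pow_two, xgen_mul, one_pow]
    rfl
  · -- [s,b]
    show Sgen n hn * Bgen n hn * (Sgen n hn)⁻¹ * (Bgen n hn)⁻¹ = 1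
    rw [Sgen, Bgen, ← map_inv, ← map_inv, ← map_mul, ← map_mul, ← map_mul,
      Prod.inv_mk, Prod.inv_mk, Prod.mk_mul_mk, Prod.mk_mul_mk, Prod.mk_mul_mk]
    norm_num
    rfl
  · -- [r,b]
    show Rgen n hn * Bgen n hn * (Rgen n hn)⁻¹ * (Bgen n hn)⁻¹ = 1
    rw [Rgen, Bgen, ← map_inv, ← map_inv, ← map_mul, ← map_mul, ← map_mul,
      Prod.inv_mk, Prod.inv_mk, Prod.mk_mul_mk, Prod.mk_mul_mk, Prod.mk_mul_mk]
    norm_num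
    rfl
  · -- a r a r
    show Agen n hn * Rgen n hn * Agen n hn * Rgen n hn = 1
    rw [Rgen, haut, ← map_mul, alpha_apply, Prod.mk_mul_mk]
    simp only [psi_r, toAdd_one, ZMod.val_zero, pow_zero, mul_one, one_mul,
      DihedralGroup.r_mul_r, neg_add_cancel]
    rfl
  · -- a s a (s r)⁻¹
    show Agen n hn * Sgen n hn * Agen n hn * (Sgen n hn * Rgen n hn)⁻¹ = 1
    rw [Sgen, Rgen, haut, ← map_mul, ← map_inv, ← map_mul, alpha_apply]
    simp only [psi_sr, toAdd_one, ZMod.val_zero, pow_zero, mul_one, sub_zero,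
      Prod.mk_mul_mk, one_mul, DihedralGroup.sr_mul_r, zero_add, Prod.inv_mk,
      mul_inv_cancel, inv_one]
    rfl
  · -- a b a (b r^(2^(n-4)))⁻¹
    show Agen n hn * Bgen n hn * Agen n hn * (Bgen n hn * Rgen n hn ^ 2 ^ (n - 4))⁻¹ = 1
    rw [Rgen_pow, Bgen, haut, ← map_mul, ← map_inv, ← map_mul, alpha_apply]
    simp only [Prod.mk_mul_mk, mul_one, one_mul]
    rw [toAdd_xgen_val, pow_one, map_one, one_mul, ← zel]
    simp
    rfl

/-- The forward homomorphism from the presented group to the semidirect product. -/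
def fwd : PresentedGroup (nilRels n) →* K n hn := PresentedGroup.toGroup (hrels n hn)

@[simp] lemma fwd_of (x : Fin 4) : fwd n hn (.of x) = fwdFun n hn x :=
  PresentedGroup.toGroup.of _

/-! ### The presented group side -/

def PA : PresentedGroup (nilRels n) := .of 0
def PB : PresentedGroup (nilRels n) := .of 1
def PR : PresentedGroup (nilRels n) := .of 2
def PS : PresentedGroup (nilRels n) := .of 3

lemma rel_holds {w : FreeGroup (Fin 4)} (hw : w ∈ nilRels n) :
    PresentedGroup.mk (nilRels n) w = 1 :=
  (QuotientGroup.eq_one_iff w).2 (Subgroup.subset_normalClosure hw)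

lemma nr_mem₁ : (FreeGroup.of (2 : Fin 4)) ^ 2 ^ (n - 3) ∈ nilRels n := by simp [nilRels]
lemma nr_mem₂ : (FreeGroup.of (3 : Fin 4)) ^ 2 ∈ nilRels n := by simp [nilRels]
lemma nr_mem₃ : (FreeGroup.of (3 : Fin 4) * FreeGroup.of 2) ^ 2 ∈ nilRels n := by simp [nilRels]
lemma nr_mem₄ : (FreeGroup.of (0 : Fin 4)) ^ 2 ∈ nilRels n := by simp [nilRels]
lemma nr_mem₅ : (FreeGroup.of (1 : Fin 4)) ^ 2 ∈ nilRels n := by simp [nilRels]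
lemma nr_mem₆ : FreeGroup.of (3 : Fin 4) * FreeGroup.of 1 * (FreeGroup.of (3 : Fin 4))⁻¹ *
    (FreeGroup.of (1 : Fin 4))⁻¹ ∈ nilRels n := by simp [nilRels]
lemma nr_mem₇ : FreeGroup.of (2 : Fin 4) * FreeGroup.of 1 * (FreeGroup.of (2 : Fin 4))⁻¹ *
    (FreeGroup.of (1 : Fin 4))⁻¹ ∈ nilRels n := by simp [nilRels]
lemma nr_mem₈ : FreeGroup.of (0 : Fin 4) * FreeGroup.of 2 * FreeGroup.of 0 * FreeGroup.of 2
    ∈ nilRels n := by simp [nilRels]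
lemma nr_mem₉ : FreeGroup.of (0 : Fin 4) * FreeGroup.of 3 * FreeGroup.of 0 *
    (FreeGroup.of (3 : Fin 4) * FreeGroup.of 2)⁻¹ ∈ nilRels n := by simp [nilRels]
lemma nr_mem₁₀ : FreeGroup.of (0 : Fin 4) * FreeGroup.of 1 * FreeGroup.of 0 *
    (FreeGroup.of (1 : Fin 4) * FreeGroup.of 2 ^ 2 ^ (n - 4))⁻¹ ∈ nilRels n := by simp [nilRels]

lemma hPR_pow : PR n ^ 2 ^ (n - 3) = 1 := by
  have := rel_holds n (nr_mem₁ n); rwa [map_pow] at this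

lemma hPS2 : PS n * PS n = 1 := by
  have := rel_holds n (nr_mem₂ n); rwa [map_pow, pow_two] at this

lemma hPS2' : PS n ^ 2 = 1 := by rw [pow_two]; exact hPS2 n

lemma hPA2 : PA n * PA n = 1 := by
  have := rel_holds n (nr_mem₄ n); rwa [map_pow, pow_two] at this

lemma hPA2' : PA n ^ 2 = 1 := by rw [pow_two]; exact hPA2 n

lemma hPB2 : PB n * PB n = 1 := by
  have := rel_holds n (nr_mem₅ n); rwa [map_pow, pow_two] at this

lemma hPB2' : PB n ^ 2 = 1 := by rw [pow_two]; exact hPB2 n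

lemma hPAinv : (PA n)⁻¹ = PA n := inv_eq_of_mul_eq_one_right (hPA2 n)

lemma hPSinv : (PS n)⁻¹ = PS n := inv_eq_of_mul_eq_one_right (hPS2 n)

lemma hSRS : PS n * PR n * PS n = (PR n)⁻¹ := by
  have h := rel_holds n (nr_mem₃ n)
  simp only [map_mul, map_pow] at h
  rw [pow_two, ← mul_assoc] at h
  exact eq_inv_of_mul_eq_one_left h

lemma hcommSB : PS n * PB n = PB n * PS n := by
  have := rel_holds n (nr_mem₆ n)
  simp only [map_mul, map_inv] at this
  have h2 : PS n * PB n * (PS n)⁻¹ = PB n := mul_inv_eq_one.mp this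
  calc PS n * PB n = PS n * PB n * (PS n)⁻¹ * PS n := by group
  _ = PB n * PS n := by rw [h2]

lemma hcommRB : PR n * PB n = PB n * PR n := by
  have := rel_holds n (nr_mem₇ n)
  simp only [map_mul, map_inv] at this
  have h2 : PR n * PB n * (PR n)⁻¹ = PB n := mul_inv_eq_one.mp this
  calc PR n * PB n = PR n * PB n * (PR n)⁻¹ * PR n := by group
  _ = PB n * PR n := by rw [h2]

lemma hARA : PA n * PR n * PA n = (PR n)⁻¹ := by
  have := rel_holds n (nr_mem₈ n)
  simp only [map_mul] at this
  exact eq_inv_of_mul_eq_one_left this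

lemma hASA : PA n * PS n * PA n = PS n * PR n := by
  have := rel_holds n (nr_mem₉ n)
  simp only [map_mul, map_inv] at this
  exact mul_inv_eq_one.mp this

lemma hABA : PA n * PB n * PA n = PB n * PR n ^ 2 ^ (n - 4) := by
  have := rel_holds n (nr_mem₁₀ n)
  simp only [map_mul, map_inv, map_pow] at this
  exact mul_inv_eq_one.mp this

/-! ### The backward homomorphism -/

def rho (i : ZMod (2 ^ (n - 3))) : PresentedGroup (nilRels n) := PR n ^ i.val

lemma rho_add (i j : ZMod (2 ^ (n - 3))) : rho n (i + j) = rho n i * rho n j := by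
  simp only [rho]
  rw [ZMod.val_add, pow_mod_eq' (hPR_pow n), pow_add]

lemma rho_zero : rho n 0 = 1 := by simp only [rho]; rw [ZMod.val_zero, pow_zero]

lemma rho_neg (i : ZMod (2 ^ (n - 3))) : rho n (-i) = (rho n i)⁻¹ := by
  have : rho n (-i) * rho n i = 1 := by rw [← rho_add, neg_add_cancel, rho_zero]
  exact eq_inv_of_mul_eq_one_left this

lemma rho_comm (i j : ZMod (2 ^ (n - 3))) : rho n i * rho n j = rho n j * rho n i := by
  rw [← rho_add, ← rho_add, add_comm]

lemma rho_S (i : ZMod (2 ^ (n - 3))) : rho n i * PS n = PS n * rho n (-i) := by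
  have h := conj_pow' (hPS2 n) (hSRS n) i.val
  rw [inv_pow] at h
  rw [rho_neg]
  calc rho n i * PS n = PS n * (PS n * rho n i * PS n) := by
        rw [← mul_assoc, ← mul_assoc, hPS2 n, one_mul]
  _ = (PS n) * (rho n i)⁻¹ := by simp only [rho]; rw [h]

lemma rho_A (i : ZMod (2 ^ (n - 3))) : PA n * rho n i * PA n = rho n (-i) := by
  have h := conj_pow' (hPA2 n) (hARA n) i.val
  rw [inv_pow] at h
  rw [rho_neg]
  simp only [rho]
  exact h

/-- The hom from the dihedral group to the presented group. -/
def fD : DihedralGroup (2 ^ (n - 3)) →* PresentedGroup (nilRels n) where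
  toFun x := match x with
    | .r i => rho n i
    | .sr i => PS n * rho n i
  map_one' := rho_zero n
  map_mul' a b := by
    rcases a with i | i <;> rcases b with j | j <;>
      simp only [DihedralGroup.r_mul_r, DihedralGroup.r_mul_sr, DihedralGroup.sr_mul_r,
        DihedralGroup.sr_mul_sr]
    · exact rho_add n i j
    · -- r i * sr j = sr (j - i)
      show PS n * rho n (j - i) = rho n i * (PS n * rho n j)
      rw [← mul_assoc, rho_S, mul_assoc, ← rho_add]
      congr 1
      ring_nf
    · -- sr i * r j
      show PS n * rho n (i + j) = PS n * rho n i * rho n j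
      rw [mul_assoc, rho_add]
    · -- sr i * sr j = r (j - i)
      show rho n (j - i) = PS n * rho n i * (PS n * rho n j)
      rw [mul_assoc, ← mul_assoc (rho n i), rho_S, ← mul_assoc, ← mul_assoc, hPS2 n, one_mul,
        ← rho_add]
      congr 1
      ring_nf

@[simp] lemma fD_r (i : ZMod (2 ^ (n - 3))) : fD n (.r i) = rho n i := rfl
@[simp] lemma fD_sr (i : ZMod (2 ^ (n - 3))) : fD n (.sr i) = PS n * rho n i := rfl

def fC : Multiplicative (ZMod 2) →* PresentedGroup (nilRels n) := c2hom (PB n) (hPB2' n)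

def fH : Multiplicative (ZMod 2) →* PresentedGroup (nilRels n) := c2hom (PA n) (hPA2' n)

lemma hBD (d : DihedralGroup (2 ^ (n - 3))) : Commute (PB n) (fD n d) := by
  have hbr : Commute (PB n) (PR n) := (hcommRB n).symm
  have hbs : Commute (PB n) (PS n) := (hcommSB n).symm
  rcases d with i | i
  · exact hbr.pow_right i.val
  · exact hbs.mul_right (hbr.pow_right i.val)

/-- The hom from C2 × D to the presented group. -/
def fN : Multiplicative (ZMod 2) × DihedralGroup (2 ^ (n - 3)) →* PresentedGroup (nilRels n) where
  toFun p := fC n p.1 * fD n p.2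
  map_one' := by simp
  map_mul' p q := by
    obtain ⟨c1, d1⟩ := p
    obtain ⟨c2, d2⟩ := q
    show fC n (c1 * c2) * fD n (d1 * d2) = fC n c1 * fD n d1 * (fC n c2 * fD n d2)
    rw [map_mul, map_mul]
    have hc : Commute (fC n c2) (fD n d1) := (hBD n d1).pow_left _
    exact hc.mul_mul_mul_comm (fC n c1) (fD n d2)

@[simp] lemma fN_apply (p) : fN n p = fC n p.1 * fD n p.2 := rfl

lemma fC_xgen : fC n xgen = PB n := c2hom_gen _ _
lemma fH_xgen : fH n xgen = PA n := c2hom_gen _ _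

lemma one_lt_m (hn : 5 ≤ n) : 1 < 2 ^ (n - 3) :=
  Nat.one_lt_two_pow (by omega)

lemma rho_one (hn : 5 ≤ n) : rho n 1 = PR n := by
  haveI : Fact (1 < 2 ^ (n - 3)) := ⟨one_lt_m n hn⟩
  simp only [rho]
  rw [ZMod.val_one, pow_one]

lemma hfDzel (hn : 5 ≤ n) : fD n (zel n) = PR n ^ 2 ^ (n - 4) := by
  rw [zel, fD_r]
  simp only [rho]
  rw [ZMod.val_natCast_of_lt (Nat.pow_lt_pow_right one_lt_two (by omega : n - 4 < n - 3))]

lemma hzd (hn : 5 ≤ n) (d : DihedralGroup (2 ^ (n - 3))) :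
    Commute (fD n (zel n)) (fD n d) := by
  show _ = _
  rw [← map_mul, zel_comm hn d, map_mul]

lemma key_split (x y : PresentedGroup (nilRels n)) :
    PA n * (x * y) * PA n = (PA n * x * PA n) * (PA n * y * PA n) := by
  rw [show (PA n * x * PA n) * (PA n * y * PA n)
      = PA n * x * (PA n * PA n) * y * PA n by group, hPA2 n, mul_one]
  group

lemma hAfD (hn : 5 ≤ n) (d : DihedralGroup (2 ^ (n - 3))) :
    PA n * fD n d * PA n = fD n (psi (2 ^ (n - 3)) d) := by
  rcases d with i | i
  · rw [fD_r, psi_r, fD_r, rho_A]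
  · rw [fD_sr, psi_sr, fD_sr, key_split, hASA n, rho_A, mul_assoc, ← rho_one n hn, ← rho_add,
      ← sub_eq_add_neg]

lemma hAfC (hn : 5 ≤ n) (c : Multiplicative (ZMod 2)) :
    PA n * fC n c * PA n = fC n c * fD n (zel n) ^ (Multiplicative.toAdd c).val := by
  have hc2 : ∀ c : Multiplicative (ZMod 2), c = 1 ∨ c = ofAdd 1 := by decide
  rcases hc2 c with rfl | rfl
  · simp only [map_one, mul_one, toAdd_one, ZMod.val_zero, pow_zero]
    exact hPA2 n
  · show PA n * fC n xgen * PA n = fC n xgen * fD n (zel n) ^ (Multiplicative.toAdd (ofAdd (1 : ZMod 2))).val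
    rw [fC_xgen, hABA n, hfDzel n hn, toAdd_ofAdd, show ((1 : ZMod 2)).val = 1 from rfl, pow_one]

lemma hcomp : ∀ h : Multiplicative (ZMod 2),
    (fN n).comp ((phi n hn h)).toMonoidHom
      = (MulAut.conj (fH n h)).toMonoidHom.comp (fN n) := by
  intro h
  have hc2 : ∀ c : Multiplicative (ZMod 2), c = 1 ∨ c = ofAdd 1 := by decide
  rcases hc2 h with rfl | rfl
  · refine MonoidHom.ext fun p => ?_
    simp [MulAut.conj_apply]
  · refine MonoidHom.ext fun p => ?_
    obtain ⟨c, d⟩ := p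
    have hx : phi n hn (ofAdd 1) = alpha n hn := c2hom_gen _ _
    simp only [MonoidHom.comp_apply, MulEquiv.coe_toMonoidHom, MulAut.conj_apply, hx,
      alpha_apply, fN_apply, fH_xgen]
    show fC n c * fD n (psi _ d * zel n ^ (Multiplicative.toAdd c).val)
      = PA n * (fC n c * fD n d) * (PA n)⁻¹
    rw [hPAinv n, key_split, hAfD n hn d, hAfC n hn c, map_mul, map_pow]
    have hcm : Commute (fD n (zel n) ^ (Multiplicative.toAdd c).val) (fD n (psi _ d)) :=
      (hzd n hn _).pow_left _
    rw [mul_assoc, hcm.eq.symm, ← mul_assoc, mul_assoc]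

/-- The backward homomorphism. -/
def bwd : K n hn →* PresentedGroup (nilRels n) :=
  SemidirectProduct.lift (fN n) (fH n) (hcomp n hn)

lemma left_inv_hom : (bwd n hn).comp (fwd n hn) = MonoidHom.id _ := by
  refine PresentedGroup.ext fun x => ?_
  simp only [MonoidHom.comp_apply, MonoidHom.id_apply, fwd_of]
  fin_cases x
  · show bwd n hn (Agen n hn) = PresentedGroup.of 0
    rw [Agen, bwd, SemidirectProduct.lift_inr, fH_xgen]
    rfl
  · show bwd n hn (Bgen n hn) = PresentedGroup.of 1
    rw [Bgen, bwd, SemidirectProduct.lift_inl, fN_apply, fC_xgen, map_one, mul_one]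
    rfl
  · show bwd n hn (Rgen n hn) = PresentedGroup.of 2
    rw [Rgen, bwd, SemidirectProduct.lift_inl, fN_apply, map_one, one_mul, fD_r, rho_one n hn]
    rfl
  · show bwd n hn (Sgen n hn) = PresentedGroup.of 3
    rw [Sgen, bwd, SemidirectProduct.lift_inl, fN_apply, map_one, one_mul, fD_sr, rho_zero,
      mul_one]
    rfl

lemma fwd_rho (i : ZMod (2 ^ (n - 3))) :
    fwd n hn (rho n i) = SemidirectProduct.inl (1, DihedralGroup.r i) := by
  show fwd n hn (PR n ^ i.val) = _
  rw [map_pow]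
  have : fwd n hn (PR n) = Rgen n hn := fwd_of n hn 2
  rw [this, Rgen_pow, ZMod.natCast_rightInverse i]

lemma fwd_fD (d : DihedralGroup (2 ^ (n - 3))) :
    fwd n hn (fD n d) = SemidirectProduct.inl (1, d) := by
  rcases d with i | i
  · rw [fD_r, fwd_rho]
  · rw [fD_sr, map_mul, fwd_rho]
    have : fwd n hn (PS n) = Sgen n hn := fwd_of n hn 3
    rw [this, Sgen, ← map_mul, Prod.mk_mul_mk, one_mul, DihedralGroup.sr_mul_r, zero_add]

lemma fwd_fC (c : Multiplicative (ZMod 2)) :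
    fwd n hn (fC n c) = SemidirectProduct.inl (c, 1) := by
  have hc2 : ∀ c : Multiplicative (ZMod 2), c = 1 ∨ c = xgen := by decide
  rcases hc2 c with rfl | rfl
  · rw [map_one, map_one, show ((1 : Multiplicative (ZMod 2)), (1 : DihedralGroup (2 ^ (n - 3))))
      = (1 : Multiplicative (ZMod 2) × DihedralGroup (2 ^ (n - 3))) from rfl, map_one]
  · rw [fC_xgen]
    exact fwd_of n hn 1

lemma right_inv_hom : (fwd n hn).comp (bwd n hn) = MonoidHom.id _ := by
  refine SemidirectProduct.hom_ext ?_ ?_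
  · refine MonoidHom.ext fun p => ?_
    obtain ⟨c, d⟩ := p
    show fwd n hn (bwd n hn (SemidirectProduct.inl (c, d))) = SemidirectProduct.inl (c, d)
    rw [bwd, SemidirectProduct.lift_inl, fN_apply, map_mul]
    show fwd n hn (fC n c) * fwd n hn (fD n d) = _
    rw [fwd_fC, fwd_fD, ← map_mul, Prod.mk_mul_mk, mul_one, one_mul]
  · refine MonoidHom.ext fun h => ?_
    show fwd n hn (bwd n hn (SemidirectProduct.inr h)) = SemidirectProduct.inr h
    rw [bwd, SemidirectProduct.lift_inr]
    have hc2 : ∀ c : Multiplicative (ZMod 2), c = 1 ∨ c = xgen := by decide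
    rcases hc2 h with rfl | rfl
    · rw [map_one, map_one, map_one]
    · rw [fH_xgen]
      exact fwd_of n hn 0

/-- The main isomorphism. -/
noncomputable def mainEquiv : PresentedGroup (nilRels n) ≃* K n hn :=
  MonoidHom.toMulEquiv (fwd n hn) (bwd n hn) (left_inv_hom n hn) (right_inv_hom n hn)

/-- The semidirect product is equivalent (as a type) to the product. -/
def kEquiv : K n hn ≃
    (Multiplicative (ZMod 2) × DihedralGroup (2 ^ (n - 3))) × Multiplicative (ZMod 2) where
  toFun g := ((g.left, g.right))
  invFun p := ⟨p.1, p.2⟩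
  left_inv g := rfl
  right_inv p := rfl

lemma card_P (hn5 : 5 ≤ n) : Nat.card (PresentedGroup (nilRels n)) = 2 ^ n := by
  rw [Nat.card_congr ((mainEquiv n hn5).toEquiv.trans (kEquiv n hn5)), Nat.card_prod,
    Nat.card_prod, Nat.card_congr (Multiplicative.toAdd (α := ZMod 2)), Nat.card_zmod,
    Nat.card_eq_fintype_card, DihedralGroup.card]
  rw [show (2 : ℕ) ^ n = 2 ^ (n - 3) * 2 ^ 3 by rw [← pow_add]; congr 1; omega]
  ring

end NilAux
/-- For n ≥ 5 the group with the above presentation is a nilpotent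
2-group of order 2^n, isomorphic to a semidirect product (C₂ × D_{2^{n-3}}) ⋊ C₂. -/
theorem nil_group_structure (n : ℕ) (hn : 5 ≤ n) :
    Nat.card (PresentedGroup (nilRels n)) = 2 ^ n ∧
    Group.IsNilpotent (PresentedGroup (nilRels n)) ∧
    IsPGroup 2 (PresentedGroup (nilRels n)) ∧
    ∃ φ : Multiplicative (ZMod 2) →*
        MulAut (Multiplicative (ZMod 2) × DihedralGroup (2 ^ (n - 3))),
      Nonempty (PresentedGroup (nilRels n) ≃*
        (Multiplicative (ZMod 2) × DihedralGroup (2 ^ (n - 3))) ⋊[φ]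
          Multiplicative (ZMod 2)) := by
  have hcard := NilAux.card_P n hn
  have hfin : Finite (PresentedGroup (nilRels n)) :=
    Nat.finite_of_card_ne_zero (by rw [hcard]; positivity)
  have hp : IsPGroup 2 (PresentedGroup (nilRels n)) := IsPGroup.of_card hcard
  haveI : Fact (Nat.Prime 2) := ⟨Nat.prime_two⟩
  exact ⟨hcard, hp.isNilpotent, hp, NilAux.phi n hn, ⟨NilAux.mainEquiv n hn⟩⟩
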